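/- Let m ∈ (0,1) and u : (0,1) → (0,∞) integrable with ⟨u⟩ := ∫_0^1 u ds. Then J_{m,2}[u] := -⟨u^{-m}⟩ + ⟨u^{1-m}⟩ + ⟨u⟩ - ⟨u⟩^2 ≤ -(⟨u⟩ - 1)^2. -/

import Mathlib

open Real MeasureTheory

lemma key1 {m t : ℝ} (hm0 : 0 < m) (ht : 0 < t) :
    1 + m ≤ t ^ (-m) + m * t := by
  have hw : (0:ℝ) < 1 + m := by linarith
  have h := Real.geom_mean_le_arith_mean2_weighted
    (w₁ := 1/(1+m)) (w₂ := m/(1+m)) (p₁ := t ^ (-m)) (p₂ := t)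
    (by positivity) (by positivity) (Real.rpow_nonneg ht.le _) ht.le
    (by field_simp)
  have hprod : (t ^ (-m)) ^ (1/(1+m)) * t ^ (m/(1+m)) = 1 := by
    rw [← Real.rpow_mul ht.le, ← Real.rpow_add ht]
    have : -m * (1 / (1 + m)) + m / (1 + m) = 0 := by field_simp; ring
    rw [this, Real.rpow_zero]
  rw [hprod] at h
  have h2 := mul_le_mul_of_nonneg_left h hw.le
  have : (1+m) * (1 / (1 + m) * t ^ (-m) + m / (1 + m) * t) = t ^ (-m) + m * t := by
    field_simp
  linarith [h2, this.symm.le]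

lemma key2 {m t : ℝ} (hm0 : 0 < m) (hm1 : m < 1) (ht : 0 < t) :
    t ^ (1 - m) ≤ (1 - m) * t + m := by
  have h := Real.geom_mean_le_arith_mean2_weighted
    (w₁ := 1-m) (w₂ := m) (p₁ := t) (p₂ := 1)
    (by linarith) hm0.le ht.le zero_le_one (by ring)
  simpa using h


/-- For `m ∈ (0,1)` and integrable `u : (0,1) → (0,∞)` with mean `⟨u⟩`,
`J_{m,2}[u] := -⟨u^{-m}⟩ + ⟨u^{1-m}⟩ + ⟨u⟩ - ⟨u⟩² ≤ -(⟨u⟩ - 1)²`. -/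
theorem stmt_8 (m : ℝ) (hm : m ∈ Set.Ioo (0 : ℝ) 1) (u : ℝ → ℝ)
    (hupos : ∀ s ∈ Set.Ioo (0 : ℝ) 1, 0 < u s)
    (hu : IntegrableOn u (Set.Ioo (0 : ℝ) 1))
    (hu1 : IntegrableOn (fun s => u s ^ (-m)) (Set.Ioo (0 : ℝ) 1))
    (hu2 : IntegrableOn (fun s => u s ^ (1 - m)) (Set.Ioo (0 : ℝ) 1)) :
    -(∫ s in Set.Ioo (0 : ℝ) 1, u s ^ (-m)) + (∫ s in Set.Ioo (0 : ℝ) 1, u s ^ (1 - m)) +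
        (∫ s in Set.Ioo (0 : ℝ) 1, u s) - (∫ s in Set.Ioo (0 : ℝ) 1, u s) ^ (2 : ℕ) ≤
      -((∫ s in Set.Ioo (0 : ℝ) 1, u s) - 1) ^ (2 : ℕ) := by
  obtain ⟨hm0, hm1⟩ := hm
  set A := ∫ s in Set.Ioo (0 : ℝ) 1, u s with hA_def
  have hms : MeasurableSet (Set.Ioo (0 : ℝ) 1) := measurableSet_Ioo
  have hvol : (volume (Set.Ioo (0 : ℝ) 1)).toReal = 1 := by
    simp [Real.volume_Ioo]
  have h0 : 0 ≤ᵐ[volume.restrict (Set.Ioo (0:ℝ) 1)] u := by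
    filter_upwards [ae_restrict_mem hms] with s hs using (hupos s hs).le
  have hA : 0 < A := by
    rw [hA_def, setIntegral_pos_iff_support_of_nonneg_ae h0 hu]
    have hsub : Set.Ioo (0:ℝ) 1 ⊆ Function.support u ∩ Set.Ioo (0:ℝ) 1 :=
      fun s hs => ⟨(hupos s hs).ne', hs⟩
    calc (0 : ENNReal) < volume (Set.Ioo (0:ℝ) 1) := by simp [Real.volume_Ioo]
      _ ≤ _ := measure_mono hsub
  -- pointwise bounds
  have hAm : (0:ℝ) < A ^ (-m) := Real.rpow_pos_of_pos hA _
  have hpt1 : ∀ s ∈ Set.Ioo (0:ℝ) 1,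
      (1+m) * A ^ (-m) - (m * A ^ (-m) / A) * u s ≤ u s ^ (-m) := by
    intro s hs
    have hx := hupos s hs
    have ht : 0 < u s / A := div_pos hx hA
    have h := key1 (t := u s / A) hm0 ht
    have hdiv : (u s / A) ^ (-m) = u s ^ (-m) / A ^ (-m) :=
      Real.div_rpow hx.le hA.le _
    rw [hdiv] at h
    have h2 := mul_le_mul_of_nonneg_left h hAm.le
    have e1 : A ^ (-m) * (u s ^ (-m) / A ^ (-m) + m * (u s / A))
        = u s ^ (-m) + m * A ^ (-m) / A * u s := by field_simp
    nlinarith [h2, e1]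
  have hpt2 : ∀ s ∈ Set.Ioo (0:ℝ) 1,
      u s ^ (1-m) ≤ m * A ^ (1-m) + ((1-m) * A ^ (1-m) / A) * u s := by
    intro s hs
    have hx := hupos s hs
    have ht : 0 < u s / A := div_pos hx hA
    have h := key2 (t := u s / A) hm0 hm1 ht
    have hA1m : (0:ℝ) < A ^ (1-m) := Real.rpow_pos_of_pos hA _
    have hdiv : (u s / A) ^ (1-m) = u s ^ (1-m) / A ^ (1-m) :=
      Real.div_rpow hx.le hA.le _
    rw [hdiv] at h
    have h2 := mul_le_mul_of_nonneg_left h hA1m.le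
    have e1 : A ^ (1-m) * (u s ^ (1-m) / A ^ (1-m)) = u s ^ (1-m) := by field_simp
    have e2 : A ^ (1-m) * ((1-m) * (u s / A) + m)
        = m * A ^ (1-m) + (1-m) * A ^ (1-m) / A * u s := by field_simp; ring
    nlinarith [h2, e1, e2]
  -- integrate
  have hg1 : IntegrableOn (fun s => (1+m) * A ^ (-m) - (m * A ^ (-m) / A) * u s)
      (Set.Ioo (0:ℝ) 1) := by
    exact (integrableOn_const (by simp [Real.volume_Ioo])).sub (hu.const_mul _)
  have hg2 : IntegrableOn (fun s => m * A ^ (1-m) + ((1-m) * A ^ (1-m) / A) * u s)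
      (Set.Ioo (0:ℝ) 1) := by
    exact (integrableOn_const (by simp [Real.volume_Ioo])).add (hu.const_mul _)
  have hi1 : A ^ (-m) ≤ ∫ s in Set.Ioo (0:ℝ) 1, u s ^ (-m) := by
    have := setIntegral_mono_on hg1 hu1 hms hpt1
    have heq : ∫ s in Set.Ioo (0:ℝ) 1, ((1+m) * A ^ (-m) - (m * A ^ (-m) / A) * u s)
        = (1+m) * A ^ (-m) - (m * A ^ (-m) / A) * A := by
      rw [integral_sub (integrableOn_const (C := (1+m) * A ^ (-m)) (s := Set.Ioo (0:ℝ) 1) (μ := volume) (by simp [Real.volume_Ioo])) (hu.const_mul _),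
        setIntegral_const, integral_const_mul, ← hA_def, measureReal_def, hvol]
      simp
    rw [heq] at this
    calc A ^ (-m) = (1+m) * A ^ (-m) - (m * A ^ (-m) / A) * A := by field_simp; ring
      _ ≤ _ := this
  have hi2 : (∫ s in Set.Ioo (0:ℝ) 1, u s ^ (1-m)) ≤ A ^ (1-m) := by
    have := setIntegral_mono_on hu2 hg2 hms hpt2
    have heq : ∫ s in Set.Ioo (0:ℝ) 1, (m * A ^ (1-m) + ((1-m) * A ^ (1-m) / A) * u s)
        = m * A ^ (1-m) + ((1-m) * A ^ (1-m) / A) * A := by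
      rw [integral_add (integrableOn_const (C := m * A ^ (1-m)) (s := Set.Ioo (0:ℝ) 1) (μ := volume) (by simp [Real.volume_Ioo])) (hu.const_mul _),
        setIntegral_const, integral_const_mul, ← hA_def, measureReal_def, hvol]
      simp
    rw [heq] at this
    calc _ ≤ m * A ^ (1-m) + ((1-m) * A ^ (1-m) / A) * A := this
      _ = A ^ (1-m) := by field_simp; ring
  -- final algebra
  have hA1m_eq : A ^ (1-m) = A ^ (-m) * A := by
    rw [show (1-m) = -m + 1 by ring, Real.rpow_add hA, Real.rpow_one]
  have hkey : A ^ (1-m) - A ^ (-m) ≤ A - 1 := by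
    rw [hA1m_eq]
    rcases le_total A 1 with h | h
    · have : 1 ≤ A ^ (-m) :=
        Real.one_le_rpow_of_pos_of_le_one_of_nonpos hA h (by linarith)
      nlinarith
    · have : A ^ (-m) ≤ 1 :=
        Real.rpow_le_one_of_one_le_of_nonpos h (by linarith)
      nlinarith
  nlinarith [hi1, hi2, hkey]
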